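/- For two locks there is no correct compositional translation of blocking type (P_iP_i, P_jP_j) for any i, j ∈ {1,2} and any initial store. -/

import Mathlib

/-- Symbols of SYNCSIMPLE: `!` (bang) and `?` (ques). -/
inductive SSym | bang | ques
deriving DecidableEq

/-- A SYNCSIMPLE subprocess: a string over {!,?} ending with `0` (false) or `✓` (true). -/
abbrev SSub := List SSym × Bool

/-- A SYNCSIMPLE process: a multiset of subprocesses. -/
abbrev SProc := Multiset SSub

/-- The SYS reduction: a leading `!` and a leading `?` of two subprocesses are consumed. -/
def SysStep (P Q : SProc) : Prop :=
  ∃ (u1 u2 : List SSym) (b1 b2 : Bool) (R : SProc),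
    P = (SSym.bang :: u1, b1) ::ₘ (SSym.ques :: u2, b2) ::ₘ R ∧
    Q = (u1, b1) ::ₘ (u2, b2) ::ₘ R

/-- A process is successful if it contains the subprocess `✓`. -/
def SSuccessful (P : SProc) : Prop := (([], true) : SSub) ∈ P

def SMayConv (P : SProc) : Prop :=
  ∃ Q, Relation.ReflTransGen SysStep P Q ∧ SSuccessful Q

def SMustConv (P : SProc) : Prop :=
  ∀ Q, Relation.ReflTransGen SysStep P Q → SMayConv Q

/-- Lock operations: put `P_i` and take `T_i`. -/
inductive LOp | put | take
deriving DecidableEq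

abbrev LSym (k : ℕ) := LOp × Fin k
abbrev LSub (k : ℕ) := List (LSym k) × Bool
abbrev LProc (k : ℕ) := Multiset (LSub k)
/-- The store of `k` locks: `true` = full (■), `false` = empty (□). -/
abbrev Store (k : ℕ) := Fin k → Bool

/-- LOCKSIMPLE step: `P_i` fills an empty lock `i` (blocks if full);
    `T_i` empties lock `i` and never blocks. -/
def LockStep {k : ℕ} : (LProc k × Store k) → (LProc k × Store k) → Prop :=
  fun s t => ∃ (i : Fin k) (u : List (LSym k)) (b : Bool) (R : LProc k),
    ((s.1 = ((LOp.put, i) :: u, b) ::ₘ R ∧ s.2 i = false ∧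
      t.1 = (u, b) ::ₘ R ∧ t.2 = Function.update s.2 i true) ∨
     (s.1 = ((LOp.take, i) :: u, b) ::ₘ R ∧
      t.1 = (u, b) ::ₘ R ∧ t.2 = Function.update s.2 i false))

def LSuccessful {k : ℕ} (s : LProc k × Store k) : Prop := (([], true) : LSub k) ∈ s.1

def LMayConv {k : ℕ} (s : LProc k × Store k) : Prop :=
  ∃ t, Relation.ReflTransGen LockStep s t ∧ LSuccessful t

def LMustConv {k : ℕ} (s : LProc k × Store k) : Prop :=
  ∀ t, Relation.ReflTransGen LockStep s t → LMayConv t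

/-- The compositional translation determined by the strings `tb = τ(!)` and `tq = τ(?)`,
    applied to a subprocess. -/
def transSub {k : ℕ} (tb tq : List (LSym k)) (u : SSub) : LSub k :=
  (u.1.flatMap (fun c => match c with | SSym.bang => tb | SSym.ques => tq), u.2)

/-- The compositional translation applied to a process. -/
def transProc {k : ℕ} (tb tq : List (LSym k)) (P : SProc) : LProc k :=
  P.map (transSub tb tq)

/-- Correctness of the compositional translation `(tb, tq)` with initial store `IS`:
    may- and must-convergence are preserved and reflected. -/
def Correct {k : ℕ} (IS : Store k) (tb tq : List (LSym k)) : Prop :=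
  ∀ P : SProc,
    (SMayConv P ↔ LMayConv (transProc tb tq P, IS)) ∧
    (SMustConv P ↔ LMustConv (transProc tb tq P, IS))

/-- The solo execution of the string `s` from store `IS` reaches the point where
    `(put, i) :: rest` remains and deadlocks there since lock `i` is full. -/
def SoloBlocked {k : ℕ} (IS : Store k) (s : List (LSym k)) (i : Fin k)
    (rest : List (LSym k)) : Prop :=
  ∃ C : Store k,
    Relation.ReflTransGen LockStep (({(s, false)} : LProc k), IS)
      (({((LOp.put, i) :: rest, false)} : LProc k), C) ∧
    C i = true

/-- Blocking type `P_i`: the blocking prefix is `R P_i` with `R` free of `P_i, T_i`. -/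
def BlockingTypeP {k : ℕ} (IS : Store k) (s : List (LSym k)) (i : Fin k) : Prop :=
  ∃ r rest, s = r ++ (LOp.put, i) :: rest ∧ (∀ x ∈ r, x.2 ≠ i) ∧
    SoloBlocked IS s i rest

/-- Blocking type `P_i P_i`: the blocking prefix is `R₁ P_i R₂ P_i` with
    `R₂` free of `P_i, T_i`, deadlocking exactly before the last `P_i`. -/
def BlockingTypePP {k : ℕ} (IS : Store k) (s : List (LSym k)) (i : Fin k) : Prop :=
  ∃ r1 r2 rest, s = r1 ++ (LOp.put, i) :: r2 ++ (LOp.put, i) :: rest ∧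
    (∀ x ∈ r2, x.2 ≠ i) ∧ SoloBlocked IS s i rest

namespace NoPP

abbrev Op := LSym 2

def opv : LOp → Bool | .put => true | .take => false

def soloRun : List Op → Store 2 → List Op × Store 2
  | [], S => ([], S)
  | (LOp.take, x) :: u, S => soloRun u (Function.update S x false)
  | (LOp.put, x) :: u, S =>
    if S x = true then ((LOp.put, x) :: u, S)
    else soloRun u (Function.update S x true)

def applyOps : List Op → Store 2 → Store 2
  | [], S => S
  | (op, x) :: u, S => applyOps u (Function.update S x (opv op))

def lastOn (x : Fin 2) : List Op → Option LOp
  | [] => none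
  | (op, y) :: u => match lastOn x u with
      | some o => some o
      | none => if y = x then some op else none

def firstOn (x : Fin 2) : List Op → Option LOp
  | [] => none
  | (op, y) :: u => if y = x then some op else firstOn x u

lemma soloRun_shape : ∀ (u : List Op) (S : Store 2),
    (soloRun u S).1 = [] ∨
      ∃ x v, (soloRun u S).1 = (LOp.put, x) :: v ∧ (soloRun u S).2 x = true
  | [], S => Or.inl rfl
  | (LOp.take, x) :: u, S => soloRun_shape u _
  | (LOp.put, x) :: u, S => by
      by_cases h : S x = true
      · right; exact ⟨x, u, by simp [soloRun, h]⟩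
      · simpa [soloRun, h] using soloRun_shape u (Function.update S x true)

lemma soloRun_append_nil : ∀ (u v : List Op) (S T : Store 2),
    soloRun u S = ([], T) → soloRun (u ++ v) S = soloRun v T
  | [], v, S, T, h => by
      simp only [soloRun, Prod.mk.injEq] at h
      simp [soloRun, h.2]
  | (LOp.take, x) :: u, v, S, T, h => by
      simpa [soloRun] using soloRun_append_nil u v _ T (by simpa [soloRun] using h)
  | (LOp.put, x) :: u, v, S, T, h => by
      by_cases hx : S x = true
      · simp [soloRun, hx] at h
      · simp only [soloRun, hx, if_false, List.cons_append] at h ⊢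
        simpa [soloRun, hx] using soloRun_append_nil u v _ T h

lemma soloRun_append_stuck : ∀ (u v : List Op) (S T : Store 2) (a : Op) (w : List Op),
    soloRun u S = (a :: w, T) → soloRun (u ++ v) S = (a :: w ++ v, T)
  | [], v, S, T, a, w, h => by simp [soloRun] at h
  | (LOp.take, x) :: u, v, S, T, a, w, h => by
      simpa [soloRun] using soloRun_append_stuck u v _ T a w (by simpa [soloRun] using h)
  | (LOp.put, x) :: u, v, S, T, a, w, h => by
      by_cases hx : S x = true
      · simp only [soloRun, hx, if_true] at h
        obtain ⟨h1, h2⟩ := Prod.mk.injEq .. ▸ h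
        simp only [List.cons_append, soloRun, hx, if_true]
        cases h1; cases h2; rfl
      · simp only [soloRun, hx, if_false, List.cons_append] at h ⊢
        simpa [soloRun, hx] using soloRun_append_stuck u v _ T a w h

lemma soloRun_complete : ∀ (u : List Op) (S : Store 2),
    (soloRun u S).1 = [] → (soloRun u S).2 = applyOps u S
  | [], S, _ => rfl
  | (LOp.take, x) :: u, S, h => soloRun_complete u _ h
  | (LOp.put, x) :: u, S, h => by
      by_cases hx : S x = true
      · simp [soloRun, hx] at h
      · simp only [soloRun, hx, if_false] at h ⊢
        exact soloRun_complete u _ h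

lemma applyOps_eq : ∀ (u : List Op) (S : Store 2) (x : Fin 2),
    applyOps u S x = ((lastOn x u).elim (S x) opv)
  | [], S, x => rfl
  | (op, y) :: u, S, x => by
      have IH := applyOps_eq u (Function.update S y (opv op)) x
      simp only [applyOps, lastOn]
      cases h : lastOn x u with
      | some o => simp [h] at IH ⊢; exact IH
      | none =>
        simp [h] at IH
        by_cases hyx : y = x
        · subst hyx; simp [IH, Function.update_self]
        · simp [hyx, IH, Function.update_of_ne (Ne.symm hyx) ]

lemma lastOn_append_right : ∀ (u v : List Op) (x : Fin 2) (o : LOp),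
    lastOn x v = some o → lastOn x (u ++ v) = some o
  | [], v, x, o, h => h
  | (op, y) :: u, v, x, o, h => by
      have IH := lastOn_append_right u v x o h
      show (match lastOn x (u ++ v) with
        | some o => some o | none => if y = x then some op else none) = some o
      rw [IH]

lemma lastOn_free : ∀ (u : List Op) (x : Fin 2), (∀ p ∈ u, p.2 ≠ x) → lastOn x u = none
  | [], x, _ => rfl
  | (op, y) :: u, x, h => by
      have hy : y ≠ x := h (op, y) List.mem_cons_self
      simp only [lastOn, lastOn_free u x (fun p hp => h p (List.mem_cons_of_mem _ hp)), hy,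
        if_false]

lemma lastOn_none_iff_firstOn : ∀ (u : List Op) (x : Fin 2),
    (lastOn x u = none ↔ firstOn x u = none)
  | [], x => Iff.rfl
  | (op, y) :: u, x => by
      have hshow : lastOn x ((op, y) :: u) = (match lastOn x u with
        | some o => some o | none => if y = x then some op else none) := rfl
      have hshow2 : firstOn x ((op, y) :: u) = (if y = x then some op else firstOn x u) := rfl
      rw [hshow, hshow2]
      by_cases hy : y = x
      · simp only [hy, if_pos rfl]
        cases hl : lastOn x u <;> simp
      · simp only [hy, if_false]
        cases hl : lastOn x u with
        | some o =>
            simp only []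
            constructor
            · intro h; cases h
            · intro h
              have := (lastOn_none_iff_firstOn u x).2 h
              rw [hl] at this; cases this
        | none =>
            have := lastOn_none_iff_firstOn u x
            rw [hl] at this
            simp only []
            exact ⟨fun _ => this.1 rfl, fun _ => trivial⟩

lemma firstOn_append : ∀ (u v : List Op) (x : Fin 2) (o : LOp),
    firstOn x u = some o → firstOn x (u ++ v) = some o
  | [], v, x, o, h => by simp [firstOn] at h
  | (op, y) :: u, v, x, o, h => by
      by_cases hy : y = x
      · simpa [firstOn, hy] using (by simpa [firstOn, hy] using h)
      · simp only [firstOn, hy, if_false, List.cons_append] at h ⊢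
        exact firstOn_append u v x o h

lemma stuck_first_put : ∀ (u : List Op) (S : Store 2) (x : Fin 2),
    firstOn x u = some LOp.put → S x = true →
    (soloRun u S).2 x = true ∧ ∃ z v, (soloRun u S).1 = (LOp.put, z) :: v
  | [], S, x, h, _ => by simp [firstOn] at h
  | (op, y) :: u, S, x, h, hS => by
      by_cases hy : y = x
      · subst hy
        have hshow : firstOn y ((op, y) :: u) = some op := by
          simp [firstOn]
        rw [hshow] at h
        cases h
        simp [soloRun, hS]
      · simp only [firstOn, hy, if_false] at h
        have hupd : ∀ c, (Function.update S y c) x = S x :=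
          fun c => Function.update_of_ne (fun hh => hy hh.symm) c S
        cases op with
        | take =>
            simpa [soloRun] using stuck_first_put u _ x h (by rw [hupd]; exact hS)
        | put =>
            by_cases hSy : S y = true
            · exact ⟨by simp [soloRun, hSy, hS], y, u, by simp [soloRun, hSy]⟩
            · simp only [soloRun, hSy, if_false]
              exact stuck_first_put u _ x h (by rw [hupd]; exact hS)

lemma replay : ∀ (u ext : List Op) (S S' : Store 2), (soloRun u S).1 = [] →
    (∃ x, firstOn x u = some LOp.put ∧ S' x = true ∧ S x = false ∧
        (soloRun (u ++ ext) S').2 x = true ∧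
        ∃ v, (soloRun (u ++ ext) S').1 = (LOp.put, x) :: v)
    ∨ soloRun (u ++ ext) S' = soloRun ext (applyOps u S')
  | [], ext, S, S', _ => Or.inr rfl
  | (LOp.take, y) :: u, ext, S, S', h => by
      have h' : (soloRun u (Function.update S y false)).1 = [] := by simpa [soloRun] using h
      rcases replay u ext (Function.update S y false) (Function.update S' y false) h' with
        ⟨x, h1, h2, h3, h4, h5⟩ | hr
      · have hxy : x ≠ y := by
          intro hh; subst hh
          simp [Function.update_self] at h2
        have hyx : ¬ (y = x) := fun hh => hxy hh.symm
        refine Or.inl ⟨x, ?_, ?_, ?_, ?_, ?_⟩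
        · simpa [firstOn, hyx] using h1
        · simpa [Function.update_of_ne hxy] using h2
        · simpa [Function.update_of_ne hxy] using h3
        · simpa [soloRun] using h4
        · simpa [soloRun] using h5
      · exact Or.inr (by simpa [soloRun, applyOps, opv] using hr)
  | (LOp.put, y) :: u, ext, S, S', h => by
      by_cases hSy : S y = true
      · simp [soloRun, hSy] at h
      · have h' : (soloRun u (Function.update S y true)).1 = [] := by
          simpa [soloRun, hSy] using h
        by_cases hS'y : S' y = true
        · refine Or.inl ⟨y, by simp [firstOn], hS'y, by simpa using hSy, ?_, u ++ ext, ?_⟩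
          · simp [soloRun, hS'y, hS'y]
          · simp [soloRun, hS'y]
        · rcases replay u ext (Function.update S y true) (Function.update S' y true) h' with
            ⟨x, h1, h2, h3, h4, h5⟩ | hr
          · have hxy : x ≠ y := by
              intro hh; subst hh
              simp [Function.update_self] at h3
            have hyx : ¬ (y = x) := fun hh => hxy hh.symm
            refine Or.inl ⟨x, ?_, ?_, ?_, ?_, ?_⟩
            · simpa [firstOn, hyx] using h1
            · simpa [Function.update_of_ne hxy] using h2
            · simpa [Function.update_of_ne hxy] using h3
            · simpa [soloRun, hS'y] using h4
            · simpa [soloRun, hS'y] using h5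
          · exact Or.inr (by simpa [soloRun, hS'y, applyOps, opv] using hr)

lemma no_finish (c d w : List Op) (j : Fin 2) (hd : ∀ p ∈ d, p.2 ≠ j) (S : Store 2) :
    (soloRun (c ++ (LOp.put, j) :: d ++ (LOp.put, j) :: w) S).1 ≠ [] := by
  have hp : lastOn j (c ++ (LOp.put, j) :: d) = some LOp.put := by
    apply lastOn_append_right
    simp [lastOn, lastOn_free d j hd]
  have hassoc : c ++ (LOp.put, j) :: d ++ (LOp.put, j) :: w
      = (c ++ (LOp.put, j) :: d) ++ ((LOp.put, j) :: w) := by simp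
  rw [hassoc]
  cases hrun : soloRun (c ++ (LOp.put, j) :: d) S with
  | mk r T =>
    cases r with
    | nil =>
        rw [soloRun_append_nil _ _ _ _ hrun]
        have hT : T = applyOps (c ++ (LOp.put, j) :: d) S := by
          have := soloRun_complete (c ++ (LOp.put, j) :: d) S (by rw [hrun])
          rw [hrun] at this; exact this
        have hTj : T j = true := by rw [hT, applyOps_eq, hp]; rfl
        simp [soloRun, hTj]
    | cons a as =>
        rw [soloRun_append_stuck _ _ _ _ _ _ hrun]
        simp

lemma soloRun_reach : ∀ (u : List Op) (S : Store 2) (b : Bool) (R : LProc 2),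
    Relation.ReflTransGen LockStep ((u, b) ::ₘ R, S)
      (((soloRun u S).1, b) ::ₘ R, (soloRun u S).2)
  | [], S, b, R => Relation.ReflTransGen.refl
  | (LOp.take, x) :: u, S, b, R => by
      refine Relation.ReflTransGen.head ?_ (by simpa [soloRun] using soloRun_reach u (Function.update S x false) b R)
      exact ⟨x, u, b, R, Or.inr ⟨rfl, rfl, rfl⟩⟩
  | (LOp.put, x) :: u, S, b, R => by
      by_cases hx : S x = true
      · simp only [soloRun, hx, if_true]
        exact Relation.ReflTransGen.refl
      · refine Relation.ReflTransGen.head ?_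
          (by simpa [soloRun, hx] using soloRun_reach u (Function.update S x true) b R)
        exact ⟨x, u, b, R, Or.inl ⟨rfl, by simpa using hx, rfl, rfl⟩⟩

lemma stuck_of {P : LProc 2} {S : Store 2}
    (h : ∀ p ∈ P, p.1 = [] ∨ ∃ x v, p.1 = (LOp.put, x) :: v ∧ S x = true) :
    ∀ t, ¬ LockStep (P, S) t := by
  rintro t ⟨x, u, b, R, hc | hc⟩
  · obtain ⟨h1, h2, -⟩ := hc
    have h1' : P = ((LOp.put, x) :: u, b) ::ₘ R := h1
    have h2' : S x = false := h2
    have hm : ((LOp.put, x) :: u, b) ∈ P := by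
      rw [h1']; exact Multiset.mem_cons_self _ _
    rcases h _ hm with he | ⟨z, v, he, hz⟩
    · simp at he
    · simp only [List.cons.injEq, Prod.mk.injEq] at he
      obtain ⟨⟨-, hzx⟩, -⟩ := he
      rw [← hzx] at hz
      rw [hz] at h2'; cases h2'
  · obtain ⟨h1, -⟩ := hc
    have h1' : P = ((LOp.take, x) :: u, b) ::ₘ R := h1
    have hm : ((LOp.take, x) :: u, b) ∈ P := by
      rw [h1']; exact Multiset.mem_cons_self _ _
    rcases h _ hm with he | ⟨z, v, he, hz⟩
    · simp at he
    · simp at he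

lemma rtg_of_stuck {s t : LProc 2 × Store 2} (h : ∀ r, ¬ LockStep s r)
    (hr : Relation.ReflTransGen LockStep s t) : t = s := by
  rcases (Relation.ReflTransGen.cases_head hr) with rfl | ⟨c, hc, -⟩
  · rfl
  · exact absurd hc (h c)

lemma step_singleton {u : List Op} {b : Bool} {S : Store 2} {t : LProc 2 × Store 2}
    (h : LockStep (({(u, b)} : LProc 2), S) t) :
    ∃ u' S', t = (({(u', b)} : LProc 2), S') ∧ soloRun u S = soloRun u' S' := by
  obtain ⟨x, u₁, b₁, R, hc | hc⟩ := h
  · obtain ⟨h1, h2, h3, h4⟩ := hc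
    rw [Multiset.singleton_eq_cons_iff] at h1
    obtain ⟨hub, hR⟩ := h1
    obtain ⟨hu, hb⟩ := Prod.mk.injEq .. ▸ hub
    refine ⟨u₁, Function.update S x true, ?_, ?_⟩
    · subst hR
      refine Prod.ext_iff.2 ⟨?_, h4⟩
      rw [h3, hb]
      rfl
    · rw [hu]
      simp [soloRun, show S x = false from h2]
  · obtain ⟨h1, h3, h4⟩ := hc
    rw [Multiset.singleton_eq_cons_iff] at h1
    obtain ⟨hub, hR⟩ := h1
    obtain ⟨hu, hb⟩ := Prod.mk.injEq .. ▸ hub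
    refine ⟨u₁, Function.update S x false, ?_, ?_⟩
    · subst hR
      refine Prod.ext_iff.2 ⟨?_, h4⟩
      rw [h3, hb]
      rfl
    · rw [hu]
      simp [soloRun]

lemma rtg_singleton {u : List Op} {b : Bool} {S : Store 2} :
    ∀ {e : LProc 2 × Store 2}, Relation.ReflTransGen LockStep (({(u, b)} : LProc 2), S) e →
    ∃ u', e.1 = ({(u', b)} : LProc 2) ∧ soloRun u S = soloRun u' e.2 := by
  intro e h
  induction h with
  | refl => exact ⟨u, rfl, rfl⟩
  | @tail q e' hr hstep IH =>
      obtain ⟨u', h1, h2⟩ := IH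
      have hq : q = (({(u', b)} : LProc 2), q.2) := Prod.ext_iff.2 ⟨h1, rfl⟩
      rw [hq] at hstep
      obtain ⟨u'', S'', he, hs⟩ := step_singleton hstep
      exact ⟨u'', by rw [he], by rw [he]; exact h2.trans hs⟩

def BadWin (IS : Store 2) (tb tq : List Op) (fb fq : Bool) : Prop :=
  ∃ n m Q S', 1 ≤ n ∧ 1 ≤ m ∧
    Relation.ReflTransGen LockStep
      (Multiset.replicate n (tb, fb) + Multiset.replicate m (tq, fq), IS) (Q, S') ∧
    (∀ t, ¬ LockStep (Q, S') t) ∧ ((([], true) : LSub 2) ∉ Q)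

lemma badwin_swap {IS : Store 2} {tb tq : List Op} {fb fq : Bool}
    (h : BadWin IS tq tb fq fb) : BadWin IS tb tq fb fq := by
  obtain ⟨n, m, Q, S', hn, hm, hr, hs, hns⟩ := h
  exact ⟨m, n, Q, S', hm, hn, by rwa [add_comm], hs, hns⟩

lemma smust (n m : ℕ) (hn : 1 ≤ n) (hm : 1 ≤ m) (fb fq : Bool) (hf : fb = true ∨ fq = true) :
    SMustConv (Multiset.replicate n (([SSym.bang], fb) : SSub)
      + Multiset.replicate m (([SSym.ques], fq) : SSub)) := by
  set P0 : SProc := Multiset.replicate n (([SSym.bang], fb) : SSub)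
      + Multiset.replicate m (([SSym.ques], fq) : SSub) with hP0
  have hstep : ∀ Q Q' : SProc,
      ((([], true) : SSub) ∈ Q ∨ Q = P0) → SysStep Q Q' →
      ((([], true) : SSub) ∈ Q' ∨ Q' = P0) := by
    rintro Q Q' (hmem | rfl) ⟨u1, u2, b1, b2, R, hQ, hQ'⟩
    · left
      rw [hQ] at hmem
      rw [hQ']
      rcases Multiset.mem_cons.1 hmem with he | hmem2
      · cases he
      rcases Multiset.mem_cons.1 hmem2 with he | hmem3
      · cases he
      exact Multiset.mem_cons_of_mem (Multiset.mem_cons_of_mem hmem3)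
    · left
      have hb : ((SSym.bang :: u1, b1) : SSub) ∈ P0 := by
        rw [hQ]; exact Multiset.mem_cons_self _ _
      rw [hP0, Multiset.mem_add] at hb
      have hb1 : b1 = fb := by
        rcases hb with hb | hb
        · exact (Prod.mk.injEq .. ▸ (Multiset.eq_of_mem_replicate hb)).2
        · have := (Prod.mk.injEq .. ▸ (Multiset.eq_of_mem_replicate hb)).1
          cases this
      have hq : ((SSym.ques :: u2, b2) : SSub) ∈ P0 := by
        have : ((SSym.ques :: u2, b2) : SSub) ∈ (SSym.bang :: u1, b1) ::ₘ
            ((SSym.ques :: u2, b2) ::ₘ R) := Multiset.mem_cons_of_mem (Multiset.mem_cons_self _ _)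
        rw [← hQ] at this; exact this
      rw [hP0, Multiset.mem_add] at hq
      have hb2 : b2 = fq := by
        rcases hq with hq | hq
        · have := (Prod.mk.injEq .. ▸ (Multiset.eq_of_mem_replicate hq)).1
          cases this
        · exact (Prod.mk.injEq .. ▸ (Multiset.eq_of_mem_replicate hq)).2
      rw [hQ']
      rcases hf with hf | hf
      · have hu1 : u1 = [] := by
          rcases hb with hb | hb
          · exact (List.cons.injEq .. ▸ (Prod.mk.injEq .. ▸ (Multiset.eq_of_mem_replicate hb)).1).2
          · have := (Prod.mk.injEq .. ▸ (Multiset.eq_of_mem_replicate hb)).1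
            cases this
        rw [hu1, hb1, hf]
        exact Multiset.mem_cons_self _ _
      · have hu2 : u2 = [] := by
          rcases hq with hq | hq
          · have := (Prod.mk.injEq .. ▸ (Multiset.eq_of_mem_replicate hq)).1
            cases this
          · exact (List.cons.injEq .. ▸ (Prod.mk.injEq .. ▸ (Multiset.eq_of_mem_replicate hq)).1).2
        refine Multiset.mem_cons_of_mem ?_
        rw [hu2, hb2, hf]
        exact Multiset.mem_cons_self _ _
  intro Q hrtg
  have hinv : (([], true) : SSub) ∈ Q ∨ Q = P0 := by
    clear hf
    induction hrtg with
    | refl => exact Or.inr rfl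
    | tail hr hstep' IH => exact hstep _ _ IH hstep'
  rcases hinv with hmem | rfl
  · exact ⟨Q, Relation.ReflTransGen.refl, hmem⟩
  · obtain ⟨n', rfl⟩ : ∃ n', n = n' + 1 := ⟨n - 1, (Nat.succ_pred_eq_of_pos hn).symm⟩
    obtain ⟨m', rfl⟩ : ∃ m', m = m' + 1 := ⟨m - 1, (Nat.succ_pred_eq_of_pos hm).symm⟩
    refine ⟨(([], fb) : SSub) ::ₘ (([], fq) : SSub) ::ₘ
      (Multiset.replicate n' (([SSym.bang], fb) : SSub)
        + Multiset.replicate m' (([SSym.ques], fq) : SSub)),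
      Relation.ReflTransGen.single ?_, ?_⟩
    · refine ⟨[], [], fb, fq, _, ?_, rfl⟩
      rw [hP0]
      simp only [Multiset.replicate_succ]
      rw [Multiset.cons_add, Multiset.add_cons]
    · rcases hf with hf | hf
      · rw [hf]; exact Multiset.mem_cons_self _ _
      · rw [hf]; exact Multiset.mem_cons_of_mem (Multiset.mem_cons_self _ _)

lemma badwin_contra {IS : Store 2} {tb tq : List Op} (hC : Correct IS tb tq)
    {fb fq : Bool} (hf : fb = true ∨ fq = true) : ¬ BadWin IS tb tq fb fq := by
  rintro ⟨n, m, Q, S', hn, hm, hr, hstuck, hns⟩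
  set P : SProc := Multiset.replicate n (([SSym.bang], fb) : SSub)
      + Multiset.replicate m (([SSym.ques], fq) : SSub) with hP
  have htrans : transProc tb tq P = Multiset.replicate n ((tb, fb) : LSub 2)
      + Multiset.replicate m ((tq, fq) : LSub 2) := by
    rw [hP]
    unfold transProc
    rw [Multiset.map_add, Multiset.map_replicate, Multiset.map_replicate]
    congr 1 <;> · congr 1; unfold transSub; simp
  have hmust : LMustConv (transProc tb tq P, IS) :=
    ((hC P).2).mp (smust n m hn hm fb fq hf)
  rw [htrans] at hmust
  have hmay : LMayConv (Q, S') := hmust (Q, S') hr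
  obtain ⟨t, hrt, hsucc⟩ := hmay
  rw [rtg_of_stuck hstuck hrt] at hsucc
  exact hns hsucc

def other (i : Fin 2) : Fin 2 := i + 1

lemma other_ne (i : Fin 2) : other i ≠ i := by revert i; decide

lemma fin2_cases (i z : Fin 2) : z = i ∨ z = other i := by revert i z; decide

lemma ne_nil_true_left {u : List Op} : (([], true) : LSub 2) ≠ (u, false) := by simp

lemma ne_nil_true_cons {a : Op} {u : List Op} {b : Bool} :
    (([], true) : LSub 2) ≠ (a :: u, b) := by simp

lemma soloRun_len : ∀ (u : List Op) (S : Store 2), (soloRun u S).1.length ≤ u.length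
  | [], _ => le_refl _
  | (LOp.take, x) :: u, S => le_trans (soloRun_len u _) (Nat.le_succ _)
  | (LOp.put, x) :: u, S => by
      by_cases hx : S x = true
      · simp [soloRun, hx]
      · simp only [soloRun, hx, if_false]
        exact le_trans (soloRun_len u _) (Nat.le_succ _)

lemma deploy {pq ext : List Op} {IS C : Store 2}
    (hpq : (soloRun pq IS).1 = [])
    (h : ∀ x : Fin 2, firstOn x pq = some LOp.put → C x = true → IS x = false → False) :
    soloRun (pq ++ ext) C = soloRun ext (applyOps pq C) := by
  rcases replay pq ext IS C hpq with ⟨x, h1, h2, h3, -, -⟩ | hr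
  · exact absurd h3 (fun h3 => h x h1 h2 h3)
  · exact hr

lemma deployQ {pq wq : List Op} {j : Fin 2} {IS C : Store 2}
    (hpq : (soloRun pq IS).1 = [])
    (hlj : lastOn j pq = some LOp.put)
    (h : ∀ x : Fin 2, firstOn x pq = some LOp.put → C x = true → IS x = false → False) :
    soloRun (pq ++ (LOp.put, j) :: wq) C = ((LOp.put, j) :: wq, applyOps pq C) ∧
      applyOps pq C j = true := by
  have hDj : applyOps pq C j = true := by rw [applyOps_eq, hlj]; rfl
  refine ⟨?_, hDj⟩
  rw [deploy hpq h]
  simp [soloRun, hDj]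

lemma resume_reach (i : Fin 2) (ut : List Op) (b : Bool) (R : LProc 2) (S : Store 2)
    (hS : S i = false) :
    Relation.ReflTransGen LockStep (((LOp.put, i) :: ut, b) ::ₘ R, S)
      (((soloRun ut (Function.update S i true)).1, b) ::ₘ R,
        (soloRun ut (Function.update S i true)).2) := by
  have hstep : LockStep (((LOp.put, i) :: ut, b) ::ₘ R, S)
      ((ut, b) ::ₘ R, Function.update S i true) :=
    ⟨i, ut, b, R, Or.inl ⟨rfl, hS, rfl, rfl⟩⟩
  exact Relation.ReflTransGen.head hstep (soloRun_reach ut _ b R)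

lemma loop (IS : Store 2) (i : Fin 2) (pq wq : List Op)
    (hpq : (soloRun pq IS).1 = [])
    (hlo : lastOn (other i) pq = some LOp.put)
    (hli : lastOn i pq = some LOp.take)
    (hfi : firstOn i pq ≠ some LOp.put) :
    ∀ (ut : List Op) (Qs : LProc 2) (S : Store 2),
    (∀ p ∈ Qs, ∃ v, p = (((LOp.put, other i) :: v, true) : LSub 2)) →
    S i = false → S (other i) = true →
    ∃ (M : ℕ) (Q : LProc 2) (S' : Store 2),
      Relation.ReflTransGen LockStep
        ((((LOp.put, i) :: ut, false) : LSub 2) ::ₘ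
          (Qs + Multiset.replicate M ((pq ++ (LOp.put, other i) :: wq, true) : LSub 2)), S)
        (Q, S') ∧
      (∀ t, ¬ LockStep (Q, S') t) ∧ ((([], true) : LSub 2) ∉ Q) := by
  have main : ∀ (N : ℕ) (ut : List Op), ut.length ≤ N → ∀ (Qs : LProc 2) (S : Store 2),
      (∀ p ∈ Qs, ∃ v, p = (((LOp.put, other i) :: v, true) : LSub 2)) →
      S i = false → S (other i) = true →
      ∃ (M : ℕ) (Q : LProc 2) (S' : Store 2),
        Relation.ReflTransGen LockStep
          ((((LOp.put, i) :: ut, false) : LSub 2) ::ₘ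
            (Qs + Multiset.replicate M ((pq ++ (LOp.put, other i) :: wq, true) : LSub 2)), S)
          (Q, S') ∧
        (∀ t, ¬ LockStep (Q, S') t) ∧ ((([], true) : LSub 2) ∉ Q) := by
    intro N
    induction N with
    | zero =>
        intro ut hlen Qs S hQs hSi hSo
        have hut : ut = [] := List.length_eq_zero_iff.mp (Nat.le_zero.mp hlen)
        subst hut
        by_cases hC2o : (Function.update S i true) (other i) = true
        · refine ⟨0, (([], false) : LSub 2) ::ₘ Qs, Function.update S i true, ?_, ?_, ?_⟩
          · have := resume_reach i [] false (Qs + Multiset.replicate 0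
              ((pq ++ (LOp.put, other i) :: wq, true) : LSub 2)) S hSi
            simpa [soloRun] using this
          · apply stuck_of
            intro p hp
            rcases Multiset.mem_cons.1 hp with rfl | hp
            · exact Or.inl rfl
            · obtain ⟨v, rfl⟩ := hQs p hp
              exact Or.inr ⟨other i, v, rfl, hC2o⟩
          · intro hmem
            rcases Multiset.mem_cons.1 hmem with he | hmem
            · exact ne_nil_true_left he
            · obtain ⟨v, hv⟩ := hQs _ hmem
              exact ne_nil_true_cons hv
        · have hexcl : ∀ x : Fin 2, firstOn x pq = some LOp.put →
              (Function.update S i true) x = true → IS x = false → False := by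
            intro x h1 h2 h3
            rcases fin2_cases i x with rfl | rfl
            · exact hfi h1
            · rw [h2] at hC2o; exact hC2o rfl
          obtain ⟨hdep, hDo⟩ := deployQ hpq hlo hexcl
          refine ⟨1, ((LOp.put, other i) :: wq, true) ::ₘ ((([], false) : LSub 2) ::ₘ Qs),
            applyOps pq (Function.update S i true), ?_, ?_, ?_⟩
          · have step1 := resume_reach i [] false
              (Qs + Multiset.replicate 1 ((pq ++ (LOp.put, other i) :: wq, true) : LSub 2)) S hSi
            simp only [soloRun] at step1
            refine Relation.ReflTransGen.trans step1 ?_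
            have hre : (([], false) : LSub 2) ::ₘ
                (Qs + Multiset.replicate 1 ((pq ++ (LOp.put, other i) :: wq, true) : LSub 2))
                = ((pq ++ (LOp.put, other i) :: wq, true) : LSub 2) ::ₘ
                  ((([], false) : LSub 2) ::ₘ Qs) := by
              rw [Multiset.replicate_succ, Multiset.replicate_zero, Multiset.add_cons,
                add_zero]
              exact Multiset.cons_swap _ _ _
            rw [hre]
            have := soloRun_reach (pq ++ (LOp.put, other i) :: wq) (Function.update S i true)
              true ((([], false) : LSub 2) ::ₘ Qs)
            rw [hdep] at this
            exact this
          · apply stuck_of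
            intro p hp
            rcases Multiset.mem_cons.1 hp with rfl | hp
            · exact Or.inr ⟨other i, wq, rfl, hDo⟩
            rcases Multiset.mem_cons.1 hp with rfl | hp
            · exact Or.inl rfl
            · obtain ⟨v, rfl⟩ := hQs p hp
              exact Or.inr ⟨other i, v, rfl, by rw [applyOps_eq, hlo]; rfl⟩
          · intro hmem
            rcases Multiset.mem_cons.1 hmem with he | hmem
            · exact ne_nil_true_cons he
            rcases Multiset.mem_cons.1 hmem with he | hmem
            · exact ne_nil_true_left he
            · obtain ⟨v, hv⟩ := hQs _ hmem
              exact ne_nil_true_cons hv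
    | succ N IH =>
        intro ut hlen Qs S hQs hSi hSo
        by_cases hC2o : (soloRun ut (Function.update S i true)).2 (other i) = true
        · refine ⟨0, ((soloRun ut (Function.update S i true)).1, false) ::ₘ Qs,
            (soloRun ut (Function.update S i true)).2, ?_, ?_, ?_⟩
          · have := resume_reach i ut false (Qs + Multiset.replicate 0
              ((pq ++ (LOp.put, other i) :: wq, true) : LSub 2)) S hSi
            simpa using this
          · apply stuck_of
            intro p hp
            rcases Multiset.mem_cons.1 hp with rfl | hp
            · rcases soloRun_shape ut (Function.update S i true) with hsh | ⟨z, v, hsh, hz⟩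
              · exact Or.inl hsh
              · exact Or.inr ⟨z, v, hsh, hz⟩
            · obtain ⟨v, rfl⟩ := hQs p hp
              exact Or.inr ⟨other i, v, rfl, hC2o⟩
          · intro hmem
            rcases Multiset.mem_cons.1 hmem with he | hmem
            · exact ne_nil_true_left he
            · obtain ⟨v, hv⟩ := hQs _ hmem
              exact ne_nil_true_cons hv
        · have hexcl : ∀ x : Fin 2, firstOn x pq = some LOp.put →
              (soloRun ut (Function.update S i true)).2 x = true → IS x = false → False := by
            intro x h1 h2 h3
            rcases fin2_cases i x with rfl | rfl
            · exact hfi h1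
            · rw [h2] at hC2o; exact hC2o rfl
          obtain ⟨hdep, hDo⟩ := deployQ hpq hlo hexcl
          have hD3i : applyOps pq (soloRun ut (Function.update S i true)).2 i = false := by
            rw [applyOps_eq, hli]; rfl
          rcases soloRun_shape ut (Function.update S i true) with hsh | ⟨z, v, hsh, hz⟩
          · refine ⟨1, ((LOp.put, other i) :: wq, true) ::ₘ ((([], false) : LSub 2) ::ₘ Qs),
              applyOps pq (soloRun ut (Function.update S i true)).2, ?_, ?_, ?_⟩
            · have step1 := resume_reach i ut false
                (Qs + Multiset.replicate 1 ((pq ++ (LOp.put, other i) :: wq, true) : LSub 2)) S hSi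
              rw [hsh] at step1
              refine Relation.ReflTransGen.trans step1 ?_
              have hre : (([], false) : LSub 2) ::ₘ
                  (Qs + Multiset.replicate 1 ((pq ++ (LOp.put, other i) :: wq, true) : LSub 2))
                  = ((pq ++ (LOp.put, other i) :: wq, true) : LSub 2) ::ₘ
                    ((([], false) : LSub 2) ::ₘ Qs) := by
                rw [Multiset.replicate_succ, Multiset.replicate_zero, Multiset.add_cons,
                  add_zero]
                exact Multiset.cons_swap _ _ _
              rw [hre]
              have := soloRun_reach (pq ++ (LOp.put, other i) :: wq)
                (soloRun ut (Function.update S i true)).2 true ((([], false) : LSub 2) ::ₘ Qs)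
              rw [hdep] at this
              exact this
            · apply stuck_of
              intro p hp
              rcases Multiset.mem_cons.1 hp with rfl | hp
              · exact Or.inr ⟨other i, wq, rfl, hDo⟩
              rcases Multiset.mem_cons.1 hp with rfl | hp
              · exact Or.inl rfl
              · obtain ⟨v, rfl⟩ := hQs p hp
                exact Or.inr ⟨other i, v, rfl, by rw [applyOps_eq, hlo]; rfl⟩
            · intro hmem
              rcases Multiset.mem_cons.1 hmem with he | hmem
              · exact ne_nil_true_cons he
              rcases Multiset.mem_cons.1 hmem with he | hmem
              · exact ne_nil_true_left he
              · obtain ⟨v, hv⟩ := hQs _ hmem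
                exact ne_nil_true_cons hv
          · have hzi : z = i := by
              rcases fin2_cases i z with h | h
              · exact h
              · rw [h] at hz; rw [hz] at hC2o; exact absurd rfl hC2o
            rw [hzi] at hsh
            have hvlen : v.length ≤ N := by
              have h1 : ((soloRun ut (Function.update S i true)).1).length ≤ ut.length :=
                soloRun_len ut _
              rw [hsh] at h1
              simp only [List.length_cons] at h1
              omega
            obtain ⟨M', Q, S'', hrtg', hstuck', hns'⟩ := IH v hvlen
              ((((LOp.put, other i) :: wq, true) : LSub 2) ::ₘ Qs)
              (applyOps pq (soloRun ut (Function.update S i true)).2)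
              (by
                intro p hp
                rcases Multiset.mem_cons.1 hp with rfl | hp
                · exact ⟨wq, rfl⟩
                · exact hQs p hp)
              hD3i hDo
            refine ⟨M' + 1, Q, S'', ?_, hstuck', hns'⟩
            have step1 := resume_reach i ut false
              (Qs + Multiset.replicate (M' + 1)
                ((pq ++ (LOp.put, other i) :: wq, true) : LSub 2)) S hSi
            rw [hsh] at step1
            refine Relation.ReflTransGen.trans step1 ?_
            have hre : (((LOp.put, i) :: v, false) : LSub 2) ::ₘ
                (Qs + Multiset.replicate (M' + 1)
                  ((pq ++ (LOp.put, other i) :: wq, true) : LSub 2))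
                = ((pq ++ (LOp.put, other i) :: wq, true) : LSub 2) ::ₘ
                  ((((LOp.put, i) :: v, false) : LSub 2) ::ₘ
                    (Qs + Multiset.replicate M'
                      ((pq ++ (LOp.put, other i) :: wq, true) : LSub 2))) := by
              rw [Multiset.replicate_succ, Multiset.add_cons]
              exact Multiset.cons_swap _ _ _
            rw [hre]
            have step2 := soloRun_reach (pq ++ (LOp.put, other i) :: wq)
              (soloRun ut (Function.update S i true)).2 true
              ((((LOp.put, i) :: v, false) : LSub 2) ::ₘ
                (Qs + Multiset.replicate M'
                  ((pq ++ (LOp.put, other i) :: wq, true) : LSub 2)))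
            rw [hdep] at step2
            refine Relation.ReflTransGen.trans step2 ?_
            have hre2 : (((LOp.put, other i) :: wq, true) : LSub 2) ::ₘ
                ((((LOp.put, i) :: v, false) : LSub 2) ::ₘ
                  (Qs + Multiset.replicate M'
                    ((pq ++ (LOp.put, other i) :: wq, true) : LSub 2)))
                = (((LOp.put, i) :: v, false) : LSub 2) ::ₘ
                  (((((LOp.put, other i) :: wq, true) : LSub 2) ::ₘ Qs) +
                    Multiset.replicate M'
                      ((pq ++ (LOp.put, other i) :: wq, true) : LSub 2)) := by
              rw [Multiset.cons_swap, Multiset.cons_add]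
            rw [hre2]
            exact hrtg'
  intro ut
  exact main ut.length ut (le_refl _)

lemma init2 (a c : LSub 2) :
    Multiset.replicate 1 a + Multiset.replicate 1 c = a ::ₘ (c ::ₘ 0) := by
  rw [Multiset.replicate_succ, Multiset.replicate_zero, Multiset.replicate_succ,
    Multiset.replicate_zero, Multiset.cons_add, zero_add]

lemma init3 (a c : LSub 2) (m : ℕ) :
    Multiset.replicate 1 a + Multiset.replicate (m + 2) c
      = a ::ₘ (c ::ₘ (c ::ₘ Multiset.replicate m c)) := by
  rw [Multiset.replicate_succ, Multiset.replicate_zero, Multiset.replicate_succ,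
    Multiset.replicate_succ, Multiset.cons_add, zero_add]

lemma bool_ne_true {b : Bool} (h : ¬ b = true) : b = false := by
  cases b
  · rfl
  · exact absurd rfl h

lemma core (IS : Store 2) (tb : List Op) (i : Fin 2) (pb wb : List Op)
    (hsb : soloRun tb IS = ((LOp.put, i) :: wb, applyOps pb IS))
    (hAi : applyOps pb IS i = true)
    (tq : List Op) (j : Fin 2) (pq wq : List Op)
    (htq : tq = pq ++ (LOp.put, j) :: wq)
    (hlq : lastOn j pq = some LOp.put)
    (hpq : (soloRun pq IS).1 = [])
    (hnfq : ∀ S : Store 2, (soloRun tq S).1 ≠ []) :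
    BadWin IS tb tq true false ∨ BadWin IS tb tq false true ∨
      (i = j ∧ lastOn (other i) pq = some LOp.take ∧ applyOps pb IS (other i) = true) := by
  set o : Fin 2 := other i with ho
  set A : Store 2 := applyOps pb IS with hA
  -- shape of q1 after macro 2
  rcases soloRun_shape tq A with hq1sh | ⟨y, v1, hq1sh, hq1y⟩
  · exact absurd hq1sh (hnfq A)
  by_cases hBi : (soloRun tq A).2 i = true
  · -- WIN 1 : both block immediately
    left
    refine ⟨1, 1, ((soloRun tq A).1, false) ::ₘ (((LOp.put, i) :: wb, true) ::ₘ 0),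
      (soloRun tq A).2, le_refl _, le_refl _, ?_, ?_, ?_⟩
    · rw [init2]
      have m1 := soloRun_reach tb IS true (((tq, false) : LSub 2) ::ₘ 0)
      rw [hsb] at m1
      refine Relation.ReflTransGen.trans m1 ?_
      rw [Multiset.cons_swap]
      exact soloRun_reach tq A false ((((LOp.put, i) :: wb, true) : LSub 2) ::ₘ 0)
    · apply stuck_of
      intro p hp
      rcases Multiset.mem_cons.1 hp with rfl | hp
      · exact Or.inr ⟨y, v1, hq1sh, hq1y⟩
      rcases Multiset.mem_cons.1 hp with rfl | hp
      · exact Or.inr ⟨i, wb, rfl, hBi⟩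
      · exact absurd hp (Multiset.notMem_zero p)
    · intro hmem
      rcases Multiset.mem_cons.1 hmem with he | hmem
      · exact ne_nil_true_left he
      rcases Multiset.mem_cons.1 hmem with he | hmem
      · exact ne_nil_true_cons he
      · exact absurd hmem (Multiset.notMem_zero _)
  · have hBi' : (soloRun tq A).2 i = false := bool_ne_true hBi
    have hyo : y = o := by
      rcases fin2_cases i y with rfl | h
      · rw [hq1y] at hBi'; cases hBi'
      · exact h
    have hfi_tq : firstOn i tq ≠ some LOp.put := by
      intro hput
      obtain ⟨htrue, -⟩ := stuck_first_put tq A i hput hAi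
      rw [htrue] at hBi'; cases hBi'
    have hfi_pq : firstOn i pq ≠ some LOp.put := by
      intro h
      exact hfi_tq (by rw [htq]; exact firstOn_append pq _ i _ h)
    have hqA : applyOps pq A j = true := by rw [applyOps_eq, hlq]; rfl
    have hdisj : (firstOn o pq = some LOp.put ∧ A o = true) ∨ j = o := by
      rcases replay pq ((LOp.put, j) :: wq) IS A hpq with ⟨x, h1, h2, h3, h4, v', h5⟩ | hr
      · rcases fin2_cases i x with rfl | rfl
        · exact absurd h1 hfi_pq
        · exact Or.inl ⟨h1, h2⟩
      · right
        rw [← htq] at hr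
        have hstk : soloRun ((LOp.put, j) :: wq) (applyOps pq A)
            = ((LOp.put, j) :: wq, applyOps pq A) := by simp [soloRun, hqA]
        rw [hstk] at hr
        have : (LOp.put, j) :: wq = (LOp.put, y) :: v1 := by rw [← hq1sh, hr]
        have hj : j = y := ((Prod.mk.injEq .. ▸ (List.cons.injEq .. ▸ this).1).2 : j = y)
        rw [hj, hyo]
    have hBo : (soloRun tq A).2 o = true := by rw [← hyo]; exact hq1y
    -- macro 3 : resume t1
    by_cases hCo : (soloRun wb (Function.update (soloRun tq A).2 i true)).2 o = true
    · -- WIN 2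
      right; left
      refine ⟨1, 1,
        ((soloRun wb (Function.update (soloRun tq A).2 i true)).1, false) ::ₘ
          (((soloRun tq A).1, true) ::ₘ 0),
        (soloRun wb (Function.update (soloRun tq A).2 i true)).2,
        le_refl _, le_refl _, ?_, ?_, ?_⟩
      · rw [init2]
        have m1 := soloRun_reach tb IS false (((tq, true) : LSub 2) ::ₘ 0)
        rw [hsb] at m1
        refine Relation.ReflTransGen.trans m1 ?_
        rw [Multiset.cons_swap]
        have m2 := soloRun_reach tq A true ((((LOp.put, i) :: wb, false) : LSub 2) ::ₘ 0)
        refine Relation.ReflTransGen.trans m2 ?_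
        rw [Multiset.cons_swap]
        have m3 := resume_reach i wb false (((soloRun tq A).1, true) ::ₘ 0) (soloRun tq A).2 hBi'
        exact m3
      · apply stuck_of
        intro p hp
        rcases Multiset.mem_cons.1 hp with rfl | hp
        · rcases soloRun_shape wb (Function.update (soloRun tq A).2 i true) with hsh |
            ⟨z, v2, hsh, hz⟩
          · exact Or.inl hsh
          · exact Or.inr ⟨z, v2, hsh, hz⟩
        rcases Multiset.mem_cons.1 hp with rfl | hp
        · exact Or.inr ⟨y, v1, hq1sh, by rw [hyo]; exact hCo⟩
        · exact absurd hp (Multiset.notMem_zero p)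
      · intro hmem
        rcases Multiset.mem_cons.1 hmem with he | hmem
        · exact ne_nil_true_left he
        rcases Multiset.mem_cons.1 hmem with he | hmem
        · rw [hq1sh] at he; exact ne_nil_true_cons he
        · exact absurd hmem (Multiset.notMem_zero _)
    · -- macro 4 : deploy a fresh q copy
      have hCo' : (soloRun wb (Function.update (soloRun tq A).2 i true)).2 o = false :=
        bool_ne_true hCo
      have hexcl : ∀ x : Fin 2, firstOn x pq = some LOp.put →
          (soloRun wb (Function.update (soloRun tq A).2 i true)).2 x = true →
          IS x = false → False := by
        intro x h1 h2 h3
        rcases fin2_cases i x with rfl | rfl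
        · exact hfi_pq h1
        · rw [hCo'] at h2; cases h2
      obtain ⟨hdep, hDj⟩ := deployQ hpq hlq hexcl
      rw [← htq] at hdep
      cases hLo : lastOn o pq with
      | none =>
          exfalso
          rcases hdisj with ⟨hfo, -⟩ | hjo
          · rw [(lastOn_none_iff_firstOn pq o).1 hLo] at hfo; cases hfo
          · rw [hjo] at hlq; rw [hlq] at hLo; cases hLo
      | some op =>
        cases op with
        | take =>
            -- Dstat leaf
            right; right
            have hjo : j ≠ o := by
              intro h
              rw [h] at hlq; rw [hlq] at hLo; cases hLo
            have hji : j = i := by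
              rcases fin2_cases i j with h | h
              · exact h
              · exact absurd h hjo
            rcases hdisj with ⟨-, hAo⟩ | hjo'
            · exact ⟨hji.symm, rfl, hAo⟩
            · exact absurd hjo' hjo
        | put =>
            right; left
            have hDo : applyOps pq
                (soloRun wb (Function.update (soloRun tq A).2 i true)).2 o = true := by
              rw [applyOps_eq, hLo]; rfl
            -- common macro chain for the (1, 2 + M) schedules
            have hDo' : applyOps pq
                (soloRun wb (Function.update (soloRun tq A).2 i true)).2 o = true := hDo
            have macros : ∀ Rex : LProc 2,
                Relation.ReflTransGen LockStep
                  (((tb, false) : LSub 2) ::ₘ (((tq, true) : LSub 2) ::ₘ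
                    (((tq, true) : LSub 2) ::ₘ Rex)), IS)
                  ((((LOp.put, j) :: wq, true) : LSub 2) ::ₘ
                    (((soloRun wb (Function.update (soloRun tq A).2 i true)).1, false) ::ₘ
                      ((((LOp.put, o) :: v1, true) : LSub 2) ::ₘ Rex)),
                    applyOps pq (soloRun wb (Function.update (soloRun tq A).2 i true)).2) := by
              intro Rex
              have m1 := soloRun_reach tb IS false
                (((tq, true) : LSub 2) ::ₘ (((tq, true) : LSub 2) ::ₘ Rex))
              rw [hsb] at m1
              refine Relation.ReflTransGen.trans m1 ?_
              rw [Multiset.cons_swap]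
              have m2 := soloRun_reach tq A true
                ((((LOp.put, i) :: wb, false) : LSub 2) ::ₘ (((tq, true) : LSub 2) ::ₘ Rex))
              rw [hq1sh, hyo] at m2
              refine Relation.ReflTransGen.trans m2 ?_
              rw [Multiset.cons_swap]
              have m3 := resume_reach i wb false
                ((((LOp.put, o) :: v1, true) : LSub 2) ::ₘ (((tq, true) : LSub 2) ::ₘ Rex))
                (soloRun tq A).2 hBi'
              refine Relation.ReflTransGen.trans m3 ?_
              have hre : ((soloRun wb (Function.update (soloRun tq A).2 i true)).1, false) ::ₘ
                  ((((LOp.put, o) :: v1, true) : LSub 2) ::ₘ (((tq, true) : LSub 2) ::ₘ Rex))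
                  = ((tq, true) : LSub 2) ::ₘ
                    (((soloRun wb (Function.update (soloRun tq A).2 i true)).1, false) ::ₘ
                      ((((LOp.put, o) :: v1, true) : LSub 2) ::ₘ Rex)) := by
                rw [Multiset.cons_swap ((((LOp.put, o) :: v1, true) : LSub 2)) ((tq, true) : LSub 2)]
                rw [Multiset.cons_swap]
              rw [hre]
              have m4 := soloRun_reach tq
                (soloRun wb (Function.update (soloRun tq A).2 i true)).2 true
                (((soloRun wb (Function.update (soloRun tq A).2 i true)).1, false) ::ₘ
                  ((((LOp.put, o) :: v1, true) : LSub 2) ::ₘ Rex))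
              rw [hdep] at m4
              exact m4
            rcases soloRun_shape wb (Function.update (soloRun tq A).2 i true) with hsh |
              ⟨z, v2, hsh, hz⟩
            · -- WIN 3 : t1 finished
              refine ⟨1, 2, (((LOp.put, j) :: wq, true) : LSub 2) ::ₘ
                ((([], false) : LSub 2) ::ₘ ((((LOp.put, o) :: v1, true) : LSub 2) ::ₘ 0)),
                applyOps pq (soloRun wb (Function.update (soloRun tq A).2 i true)).2,
                le_refl _, by omega, ?_, ?_, ?_⟩
              · have := macros 0
                rw [hsh] at this
                rw [show Multiset.replicate 2 ((tq, true) : LSub 2)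
                    = ((tq, true) : LSub 2) ::ₘ (((tq, true) : LSub 2) ::ₘ 0) from by
                  rw [Multiset.replicate_succ, Multiset.replicate_succ, Multiset.replicate_zero]]
                rw [Multiset.replicate_succ, Multiset.replicate_zero, Multiset.cons_add, zero_add]
                exact this
              · apply stuck_of
                intro p hp
                rcases Multiset.mem_cons.1 hp with rfl | hp
                · exact Or.inr ⟨j, wq, rfl, hDj⟩
                rcases Multiset.mem_cons.1 hp with rfl | hp
                · exact Or.inl rfl
                rcases Multiset.mem_cons.1 hp with rfl | hp
                · exact Or.inr ⟨o, v1, rfl, hDo'⟩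
                · exact absurd hp (Multiset.notMem_zero p)
              · intro hmem
                rcases Multiset.mem_cons.1 hmem with he | hmem
                · exact ne_nil_true_cons he
                rcases Multiset.mem_cons.1 hmem with he | hmem
                · exact ne_nil_true_left he
                rcases Multiset.mem_cons.1 hmem with he | hmem
                · exact ne_nil_true_cons he
                · exact absurd hmem (Multiset.notMem_zero _)
            · -- t1 parked at a put on z ; z = i
              have hzi : z = i := by
                rcases fin2_cases i z with h | h
                · exact h
                · rw [h] at hz; rw [hz] at hCo'; cases hCo'
              rw [hzi] at hsh hz
              cases hLi : lastOn i pq with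
              | none =>
                  -- D i = C i = true : WIN 4
                  have hDi : applyOps pq
                      (soloRun wb (Function.update (soloRun tq A).2 i true)).2 i = true := by
                    rw [applyOps_eq, hLi]; exact hz
                  refine ⟨1, 2, (((LOp.put, j) :: wq, true) : LSub 2) ::ₘ
                    ((((LOp.put, i) :: v2, false) : LSub 2) ::ₘ
                      ((((LOp.put, o) :: v1, true) : LSub 2) ::ₘ 0)),
                    applyOps pq (soloRun wb (Function.update (soloRun tq A).2 i true)).2,
                    le_refl _, by omega, ?_, ?_, ?_⟩
                  · have := macros 0
                    rw [hsh] at this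
                    rw [show Multiset.replicate 2 ((tq, true) : LSub 2)
                        = ((tq, true) : LSub 2) ::ₘ (((tq, true) : LSub 2) ::ₘ 0) from by
                      rw [Multiset.replicate_succ, Multiset.replicate_succ,
                        Multiset.replicate_zero]]
                    rw [Multiset.replicate_succ, Multiset.replicate_zero, Multiset.cons_add,
                      zero_add]
                    exact this
                  · apply stuck_of
                    intro p hp
                    rcases Multiset.mem_cons.1 hp with rfl | hp
                    · exact Or.inr ⟨j, wq, rfl, hDj⟩
                    rcases Multiset.mem_cons.1 hp with rfl | hp
                    · exact Or.inr ⟨i, v2, rfl, hDi⟩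
                    rcases Multiset.mem_cons.1 hp with rfl | hp
                    · exact Or.inr ⟨o, v1, rfl, hDo'⟩
                    · exact absurd hp (Multiset.notMem_zero p)
                  · intro hmem
                    rcases Multiset.mem_cons.1 hmem with he | hmem
                    · exact ne_nil_true_cons he
                    rcases Multiset.mem_cons.1 hmem with he | hmem
                    · exact ne_nil_true_cons he
                    rcases Multiset.mem_cons.1 hmem with he | hmem
                    · exact ne_nil_true_cons he
                    · exact absurd hmem (Multiset.notMem_zero _)
              | some opi =>
                cases opi with
                | put =>
                    have hDi : applyOps pq
                        (soloRun wb (Function.update (soloRun tq A).2 i true)).2 i = true := by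
                      rw [applyOps_eq, hLi]; rfl
                    refine ⟨1, 2, (((LOp.put, j) :: wq, true) : LSub 2) ::ₘ
                      ((((LOp.put, i) :: v2, false) : LSub 2) ::ₘ
                        ((((LOp.put, o) :: v1, true) : LSub 2) ::ₘ 0)),
                      applyOps pq (soloRun wb (Function.update (soloRun tq A).2 i true)).2,
                      le_refl _, by omega, ?_, ?_, ?_⟩
                    · have := macros 0
                      rw [hsh] at this
                      rw [show Multiset.replicate 2 ((tq, true) : LSub 2)
                          = ((tq, true) : LSub 2) ::ₘ (((tq, true) : LSub 2) ::ₘ 0) from by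
                        rw [Multiset.replicate_succ, Multiset.replicate_succ,
                          Multiset.replicate_zero]]
                      rw [Multiset.replicate_succ, Multiset.replicate_zero, Multiset.cons_add,
                        zero_add]
                      exact this
                    · apply stuck_of
                      intro p hp
                      rcases Multiset.mem_cons.1 hp with rfl | hp
                      · exact Or.inr ⟨j, wq, rfl, hDj⟩
                      rcases Multiset.mem_cons.1 hp with rfl | hp
                      · exact Or.inr ⟨i, v2, rfl, hDi⟩
                      rcases Multiset.mem_cons.1 hp with rfl | hp
                      · exact Or.inr ⟨o, v1, rfl, hDo'⟩
                      · exact absurd hp (Multiset.notMem_zero p)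
                    · intro hmem
                      rcases Multiset.mem_cons.1 hmem with he | hmem
                      · exact ne_nil_true_cons he
                      rcases Multiset.mem_cons.1 hmem with he | hmem
                      · exact ne_nil_true_cons he
                      rcases Multiset.mem_cons.1 hmem with he | hmem
                      · exact ne_nil_true_cons he
                      · exact absurd hmem (Multiset.notMem_zero _)
                | take =>
                    -- LOOP case : j = o
                    have hjo : j = o := by
                      rcases fin2_cases i j with h | h
                      · rw [h] at hlq; rw [hlq] at hLi; cases hLi
                      · exact h
                    have hDi : applyOps pq
                        (soloRun wb (Function.update (soloRun tq A).2 i true)).2 i = false := by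
                      rw [applyOps_eq, hLi]; rfl
                    have hθ : pq ++ (LOp.put, other i) :: wq = tq := by
                      rw [htq, hjo]
                    obtain ⟨M, Q, S', hrtgL, hstuckL, hnsL⟩ :=
                      loop IS i pq wq hpq hLo hLi hfi_pq v2
                        ((((LOp.put, o) :: v1, true) : LSub 2) ::ₘ
                          ((((LOp.put, o) :: wq, true) : LSub 2) ::ₘ 0))
                        (applyOps pq (soloRun wb (Function.update (soloRun tq A).2 i true)).2)
                        (by
                          intro p hp
                          rcases Multiset.mem_cons.1 hp with rfl | hp
                          · exact ⟨v1, rfl⟩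
                          rcases Multiset.mem_cons.1 hp with rfl | hp
                          · exact ⟨wq, rfl⟩
                          · exact absurd hp (Multiset.notMem_zero p))
                        hDi hDo'
                    rw [hθ] at hrtgL
                    refine ⟨1, M + 2, Q, S', le_refl _, by omega, ?_, hstuckL, hnsL⟩
                    rw [init3]
                    have := macros (Multiset.replicate M ((tq, true) : LSub 2))
                    rw [hsh] at this
                    refine Relation.ReflTransGen.trans this ?_
                    have hre2 : (((LOp.put, j) :: wq, true) : LSub 2) ::ₘ
                        ((((LOp.put, i) :: v2, false) : LSub 2) ::ₘ
                          ((((LOp.put, o) :: v1, true) : LSub 2) ::ₘ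
                            Multiset.replicate M ((tq, true) : LSub 2)))
                        = (((LOp.put, i) :: v2, false) : LSub 2) ::ₘ
                          (((((LOp.put, o) :: v1, true) : LSub 2) ::ₘ
                            ((((LOp.put, o) :: wq, true) : LSub 2) ::ₘ 0)) +
                            Multiset.replicate M ((tq, true) : LSub 2)) := by
                      rw [Multiset.cons_add, Multiset.cons_add, zero_add, hjo]
                      rw [Multiset.cons_swap (((LOp.put, o) :: wq, true) : LSub 2)
                        (((LOp.put, i) :: v2, false) : LSub 2)]
                      rw [Multiset.cons_swap (((LOp.put, o) :: wq, true) : LSub 2)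
                        (((LOp.put, o) :: v1, true) : LSub 2)]
                    rw [hre2]
                    exact hrtgL


lemma extract (IS : Store 2) (s : List Op) (i : Fin 2) (h : BlockingTypePP IS s i) :
    ∃ p w : List Op, s = p ++ (LOp.put, i) :: w ∧ lastOn i p = some LOp.put ∧
      (soloRun p IS).1 = [] ∧
      soloRun s IS = ((LOp.put, i) :: w, applyOps p IS) ∧
      applyOps p IS i = true ∧
      (∀ S : Store 2, (soloRun s S).1 ≠ []) := by
  obtain ⟨r1, r2, rest, hdecomp, hfree, C, hrtg, hCi⟩ := h
  have hlast : lastOn i (r1 ++ (LOp.put, i) :: r2) = some LOp.put := by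
    apply lastOn_append_right
    show (match lastOn i r2 with
      | some o => some o | none => if i = i then some LOp.put else none) = some LOp.put
    rw [lastOn_free r2 i hfree]
    simp
  have hAi : applyOps (r1 ++ (LOp.put, i) :: r2) IS i = true := by
    rw [applyOps_eq, hlast]; rfl
  have hs' : s = (r1 ++ (LOp.put, i) :: r2) ++ (LOp.put, i) :: rest := by
    rw [hdecomp, List.append_assoc, List.cons_append]
  obtain ⟨u', h1, h2⟩ := rtg_singleton hrtg
  have hu' : u' = (LOp.put, i) :: rest := by
    have h1' : (((LOp.put, i) :: rest, false) : LSub 2) = ((u', false) : LSub 2) :=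
      Multiset.singleton_inj.1 h1
    exact ((Prod.mk.injEq .. ▸ h1').1).symm
  have hsrun : soloRun s IS = ((LOp.put, i) :: rest, C) := by
    rw [h2, hu']
    show soloRun ((LOp.put, i) :: rest) C = _
    simp [soloRun, hCi]
  have hpnil : (soloRun (r1 ++ (LOp.put, i) :: r2) IS).1 = [] := by
    cases hps : soloRun (r1 ++ (LOp.put, i) :: r2) IS with
    | mk r T =>
      cases r with
      | nil => rfl
      | cons a as =>
        exfalso
        have := soloRun_append_stuck (r1 ++ (LOp.put, i) :: r2) ((LOp.put, i) :: rest)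
          IS T a as hps
        rw [← hs', hsrun] at this
        have hl := congrArg (fun q => q.1.length) this
        simp [List.length_append] at hl
        omega
  have hT : (soloRun (r1 ++ (LOp.put, i) :: r2) IS).2
      = applyOps (r1 ++ (LOp.put, i) :: r2) IS :=
    soloRun_complete _ _ hpnil
  have hsrun2 : soloRun s IS
      = ((LOp.put, i) :: rest, applyOps (r1 ++ (LOp.put, i) :: r2) IS) := by
    rw [hs']
    rw [soloRun_append_nil (r1 ++ (LOp.put, i) :: r2) ((LOp.put, i) :: rest) IS
      (applyOps (r1 ++ (LOp.put, i) :: r2) IS) ?_]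
    · simp [soloRun, hAi]
    · rw [← hT]
      exact Prod.ext_iff.2 ⟨hpnil, rfl⟩
  exact ⟨r1 ++ (LOp.put, i) :: r2, rest, hs', hlast, hpnil, hsrun2, hAi, by
    intro S
    rw [hdecomp]
    exact no_finish r1 r2 rest i hfree S⟩


end NoPP

/-- for two locks there is no correct compositional translation of
blocking type `(P_iP_i, P_jP_j)` for any `i, j` and any initial store. -/
theorem no_blocking_type_PP_PP :
    ∀ (IS : Store 2) (tb tq : List (LSym 2)) (i j : Fin 2),
      Correct IS tb tq →
      BlockingTypePP IS tb i → BlockingTypePP IS tq j → False := by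
  intro IS tb tq i j hC hb hq
  obtain ⟨pb, wb, htb, hlb, hpb, hsb, hAbi, hnfb⟩ := NoPP.extract IS tb i hb
  obtain ⟨pq, wq, htq, hlq, hpq, hsq, hAqj, hnfq⟩ := NoPP.extract IS tq j hq
  rcases NoPP.core IS tb i pb wb hsb hAbi tq j pq wq htq hlq hpq hnfq with hw | hw | hd1
  · exact NoPP.badwin_contra hC (Or.inl rfl) hw
  · exact NoPP.badwin_contra hC (Or.inr rfl) hw
  rcases NoPP.core IS tq j pq wq hsq hAqj tb i pb wb htb hlb hpb hnfb with hw | hw | hd2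
  · exact NoPP.badwin_contra hC (Or.inr rfl) (NoPP.badwin_swap hw)
  · exact NoPP.badwin_contra hC (Or.inl rfl) (NoPP.badwin_swap hw)
  obtain ⟨hij, hq_take, -⟩ := hd1
  obtain ⟨hji, -, hq_true⟩ := hd2
  rw [← hij] at hq_true
  have hfalse : NoPP.applyOps pq IS (NoPP.other i) = false := by
    rw [NoPP.applyOps_eq, hq_take]; rfl
  rw [hq_true] at hfalse
  cases hfalse
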